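/- Let G be a full and flexible group of homeomorphisms of Cantor space X, and let N be the normalizer of G in Homeo(X). Then every element of N normalizes N; more precisely, the normalizer of N in Homeo(X) equals N itself. -/

import Mathlib

open Set

/-- The group structure on self-homeomorphisms of a topological space,
with `(f * g) x = f (g x)`. -/
instance homeoGroup {X : Type*} [TopologicalSpace X] : Group (X ≃ₜ X) where
  mul f g := g.trans f
  one := Homeomorph.refl X
  inv := Homeomorph.symm
  mul_assoc f g h := Homeomorph.ext fun _ => rfl
  one_mul f := Homeomorph.ext fun _ => rfl
  mul_one f := Homeomorph.ext fun _ => rfl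
  inv_mul_cancel f := Homeomorph.ext fun x => f.symm_apply_apply x

/-- Cantor space, realized concretely as `{0,1}^ℕ`. -/
abbrev Cantor : Type := ℕ → Bool

/-- `h` locally agrees with the group `G`: every point has an open neighbourhood
on which `h` coincides with some element of `G`. -/
def LocallyAgrees {X : Type*} [TopologicalSpace X] (G : Subgroup (X ≃ₜ X)) (h : X ≃ₜ X) : Prop :=
  ∀ x : X, ∃ U : Set X, IsOpen U ∧ x ∈ U ∧ ∃ g ∈ G, Set.EqOn (⇑h) (⇑g) U

/-- `G` is a full group of homeomorphisms. -/
def IsFull {X : Type*} [TopologicalSpace X] (G : Subgroup (X ≃ₜ X)) : Prop :=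
  ∀ h : X ≃ₜ X, LocallyAgrees G h → h ∈ G

/-- `G` is flexible: any proper closed set with nonempty interior can be mapped
into any other by some element of `G`. -/
def IsFlexible {X : Type*} [TopologicalSpace X] (G : Subgroup (X ≃ₜ X)) : Prop :=
  ∀ E₁ E₂ : Set X, IsClosed E₁ → E₁ ≠ Set.univ → (interior E₁).Nonempty →
    IsClosed E₂ → E₂ ≠ Set.univ → (interior E₂).Nonempty →
    ∃ g ∈ G, g '' E₁ ⊆ E₂

/-- The support of a homeomorphism: the closure of its set of moved points. -/
def supp {X : Type*} [TopologicalSpace X] (g : X ≃ₜ X) : Set X :=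
  closure {x | g x ≠ x}

/-- `g` has small support: it is the identity off a proper closed subset. -/
def HasSmallSupport {X : Type*} [TopologicalSpace X] (g : X ≃ₜ X) : Prop :=
  ∃ U : Set X, IsClosed U ∧ U ≠ Set.univ ∧ ∀ x ∉ U, g x = x

/- ### Auxiliary lemmas -/

section Aux

variable {X : Type*} [TopologicalSpace X]

@[simp] lemma homeo_mul_apply (f g : X ≃ₜ X) (x : X) : (f * g) x = f (g x) := rfl

@[simp] lemma homeo_inv_apply (f : X ≃ₜ X) (x : X) : (f⁻¹) x = f.symm x := rfl

@[simp] lemma homeo_one_apply (x : X) : (1 : X ≃ₜ X) x = x := rfl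

lemma homeo_inv_fix (f : X ≃ₜ X) {U : Set X} (hfix : ∀ x ∉ U, f x = x)
    {x : X} (hx : x ∉ U) : f⁻¹ x = x := by
  conv_lhs => rw [← hfix x hx]
  exact f.symm_apply_apply x

lemma image_isClopen (g : X ≃ₜ X) {V : Set X} (hV : IsClopen V) : IsClopen (⇑g '' V) :=
  ⟨g.isClosed_image.mpr hV.isClosed, g.isOpenMap V hV.isOpen⟩

lemma image_ne_univ (g : X ≃ₜ X) {V : Set X} (hV : V ≠ univ) : ⇑g '' V ≠ univ := by
  intro h
  apply hV
  have := congrArg (⇑g.symm '' ·) h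
  simpa [Set.image_image, Set.image_univ, g.symm.surjective.range_eq] using this

/-- The "swap" homeomorphism: acts as `g` on `V`, as `g⁻¹` on `g '' V`,
and the identity elsewhere (requires `V` and `g '' V` disjoint and clopen). -/
lemma swap_exists (g : X ≃ₜ X) (V : Set X) (hV : IsClopen V)
    (hdisj : ∀ x ∈ V, x ∉ ⇑g '' V) :
    ∃ f : X ≃ₜ X, Set.EqOn (⇑f) (⇑g) V ∧ Set.EqOn (⇑f) (⇑g.symm) (⇑g '' V) ∧
      ∀ x, x ∉ V ∪ ⇑g '' V → f x = x := by
  classical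
  have hgV : IsClopen (⇑g '' V) := image_isClopen g hV
  set F : X → X := V.piecewise (⇑g) ((⇑g '' V).piecewise (⇑g.symm) id) with hF
  have hFV : ∀ x ∈ V, F x = g x := fun x hx => Set.piecewise_eq_of_mem _ _ _ hx
  have hFgV : ∀ x ∈ ⇑g '' V, F x = g.symm x := by
    intro x hx
    have hxV : x ∉ V := fun h => hdisj x h hx
    rw [hF, Set.piecewise_eq_of_notMem _ _ _ hxV, Set.piecewise_eq_of_mem _ _ _ hx]
  have hFout : ∀ x, x ∉ V ∪ ⇑g '' V → F x = x := by
    intro x hx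
    rw [Set.mem_union] at hx
    push_neg at hx
    rw [hF, Set.piecewise_eq_of_notMem _ _ _ hx.1, Set.piecewise_eq_of_notMem _ _ _ hx.2, id]
  have hinv : Function.Involutive F := by
    intro x
    by_cases hxV : x ∈ V
    · rw [hFV x hxV]
      have h1 : g x ∈ ⇑g '' V := ⟨x, hxV, rfl⟩
      rw [hFgV _ h1, g.symm_apply_apply]
    by_cases hxgV : x ∈ ⇑g '' V
    · rw [hFgV x hxgV]
      obtain ⟨v, hv, rfl⟩ := hxgV
      rw [g.symm_apply_apply]
      rw [hFV v hv]
    · rw [hFout x (by simp [hxV, hxgV]), hFout x (by simp [hxV, hxgV])]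
  have hcont : Continuous F := by
    apply Continuous.piecewise
    · simp [hV.frontier_eq]
    · exact g.continuous
    · apply Continuous.piecewise
      · simp [hgV.frontier_eq]
      · exact g.symm.continuous
      · exact continuous_id
  refine ⟨⟨⟨F, F, hinv.leftInverse, hinv.rightInverse⟩, hcont, hcont⟩, ?_, ?_, ?_⟩
  · intro x hx; exact hFV x hx
  · intro x hx; exact hFgV x hx
  · exact hFout

end Aux

/-- Every element of the normalizer of a full flexible group that has small
support actually belongs to the group. -/
lemma small_support_mem (G : Subgroup (Cantor ≃ₜ Cantor)) (hfull : IsFull G)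
    (hflex : IsFlexible G) (f : Cantor ≃ₜ Cantor)
    (hfN : f ∈ Subgroup.normalizer (G : Set (Cantor ≃ₜ Cantor))) (hss : HasSmallSupport f) : f ∈ G := by
  obtain ⟨U, hUc, hUne, hUfix⟩ := hss
  rcases Set.eq_empty_or_nonempty U with hUe | hUnem
  · have : f = 1 := Homeomorph.ext fun x => hUfix x (by simp [hUe])
    rw [this]; exact one_mem G
  -- choose a clopen proper `V ⊇ U`
  obtain ⟨p, hp⟩ : ∃ p, p ∉ U := by
    by_contra h
    push_neg at h
    exact hUne (Set.eq_univ_of_forall h)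
  obtain ⟨W, hWclopen, hpW, hWsub⟩ :=
    compact_exists_isClopen_in_isOpen hUc.isOpen_compl hp
  set V : Set Cantor := Wᶜ with hVdef
  have hVclopen : IsClopen V := hWclopen.compl
  have hUV : U ⊆ V := fun x hx => fun hxW => hWsub hxW hx
  have hpV : p ∉ V := by simp [hVdef, hpW]
  have hVne_univ : V ≠ univ := fun h => hpV (h ▸ Set.mem_univ p)
  have hVnonempty : V.Nonempty := hUnem.mono hUV
  have hWne_univ : W ≠ univ := by
    intro h
    obtain ⟨u, hu⟩ := hUnem
    exact hWsub (h ▸ Set.mem_univ u) hu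
  have hWnonempty : W.Nonempty := ⟨p, hpW⟩
  -- flexibility: some `g ∈ G` maps `V` into `W = Vᶜ`
  obtain ⟨g, hgG, hgV⟩ := hflex V W hVclopen.isClosed hVne_univ
    (by rw [hVclopen.isOpen.interior_eq]; exact hVnonempty)
    hWclopen.isClosed hWne_univ
    (by rw [hWclopen.isOpen.interior_eq]; exact hWnonempty)
  -- the commutator `c = f g f⁻¹ g⁻¹` lies in `G` and agrees with `f` on `V`
  set c : Cantor ≃ₜ Cantor := f * g * f⁻¹ * g⁻¹ with hc
  have hcG : c ∈ G := by
    have h1 : f * g * f⁻¹ ∈ G := ((Subgroup.mem_normalizer_iff.mp hfN) g).mp hgG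
    exact mul_mem h1 (inv_mem hgG)
  have hagree : Set.EqOn (⇑f) (⇑c) V := by
    intro x hx
    have hginvx : g⁻¹ x ∉ V := by
      intro h
      have : x ∈ ⇑g '' V := ⟨g⁻¹ x, h, g.apply_symm_apply x⟩
      have hxW : x ∈ W := hgV this
      exact hx hxW
    have hginvU : g⁻¹ x ∉ U := fun h => hginvx (hUV h)
    have h2 : f⁻¹ (g⁻¹ x) = g⁻¹ x := homeo_inv_fix f hUfix hginvU
    show f x = c x
    rw [hc]
    simp only [homeo_mul_apply]
    rw [h2]
    rw [show g ((g⁻¹ : Cantor ≃ₜ Cantor) x) = x from g.apply_symm_apply x]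
  -- fullness
  apply hfull
  intro x
  by_cases hx : x ∈ V
  · exact ⟨V, hVclopen.isOpen, hx, c, hcG, hagree⟩
  · refine ⟨Vᶜ, hVclopen.isClosed.isOpen_compl, hx, 1, one_mem G, ?_⟩
    intro z hz
    have : z ∉ U := fun h => hz (hUV h)
    simpa using hUfix z this

theorem normalizer_of_normalizer_eq
    (G : Subgroup (Cantor ≃ₜ Cantor)) (hfull : IsFull G) (hflex : IsFlexible G)
    (hRubinG : ∀ φ : G ≃* G, ∃! h : Cantor ≃ₜ Cantor,
      ∀ g : G, ((φ g : G) : Cantor ≃ₜ Cantor) = h⁻¹ * (g : Cantor ≃ₜ Cantor) * h)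
    (hRubinN : ∀ φ : Subgroup.normalizer (G : Set (Cantor ≃ₜ Cantor)) ≃* Subgroup.normalizer (G : Set (Cantor ≃ₜ Cantor)), ∃! h : Cantor ≃ₜ Cantor,
      ∀ g : Subgroup.normalizer (G : Set (Cantor ≃ₜ Cantor)),
        ((φ g : Subgroup.normalizer (G : Set (Cantor ≃ₜ Cantor))) : Cantor ≃ₜ Cantor) = h⁻¹ * (g : Cantor ≃ₜ Cantor) * h) :
    Subgroup.normalizer ((Subgroup.normalizer (G : Set (Cantor ≃ₜ Cantor)) : Set (Cantor ≃ₜ Cantor))) = Subgroup.normalizer (G : Set (Cantor ≃ₜ Cantor)) := by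
  -- `T` is the set of small-support elements of `N = G.normalizer`;
  -- `S = ⟨T⟩` is the subgroup it generates.  We show `S = G`, so that `G`
  -- is characteristic under conjugation by anything normalizing `N`.
  set T : Set (Cantor ≃ₜ Cantor) :=
    {f | f ∈ Subgroup.normalizer (G : Set (Cantor ≃ₜ Cantor)) ∧ HasSmallSupport f} with hT
  set S : Subgroup (Cantor ≃ₜ Cantor) := Subgroup.closure T with hS
  have hSleG : S ≤ G := by
    rw [hS, Subgroup.closure_le]
    rintro f ⟨hfN, hfss⟩
    exact small_support_mem G hfull hflex f hfN hfss
  have hGleS : ∀ g : Cantor ≃ₜ Cantor, g ∈ G → g ∈ S := by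
    intro g hgG
    by_cases hg1 : g = 1
    · rw [hg1]; exact one_mem S
    -- `g` moves some point `x`
    obtain ⟨x, hx⟩ : ∃ x, g x ≠ x := by
      by_contra h
      push_neg at h
      exact hg1 (Homeomorph.ext h)
    -- a third point `y`
    obtain ⟨y, hy⟩ : ∃ y, y ∉ ({x, g x} : Set Cantor) := by
      have hfin : ({x, g x} : Set Cantor).Finite := (Set.finite_singleton _).insert _
      obtain ⟨y, hy⟩ := hfin.infinite_compl.nonempty
      exact ⟨y, hy⟩
    have hyx : y ≠ x := fun h => hy (by simp [h])
    have hygx : y ≠ g x := fun h => hy (by simp [h])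
    -- separate three points by open sets
    obtain ⟨A, B, hA, hB, hxA, hgxB, hAB⟩ := t2_separation hx.symm  -- x ≠ g x? careful
    obtain ⟨C, D, hC, hD, hxC, hyD, hCD⟩ := t2_separation (Ne.symm hyx)
    obtain ⟨E, Fo, hE, hFo, hgxE, hyFo, hEFo⟩ := t2_separation (Ne.symm hygx)
    -- clopen `V ∋ x` with `g '' V ∩ V = ∅` and `y ∉ V ∪ g '' V`
    have hopen : IsOpen (A ∩ C ∩ ⇑g ⁻¹' (B ∩ E)) :=
      ((hA.inter hC).inter ((hB.inter hE).preimage g.continuous))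
    have hxmem : x ∈ A ∩ C ∩ ⇑g ⁻¹' (B ∩ E) :=
      ⟨⟨hxA, hxC⟩, ⟨hgxB, hgxE⟩⟩
    obtain ⟨V, hVclopen, hxV, hVsub⟩ := compact_exists_isClopen_in_isOpen hopen hxmem
    have hVA : V ⊆ A := fun z hz => (hVsub hz).1.1
    have hVC : V ⊆ C := fun z hz => (hVsub hz).1.2
    have hgVB : ⇑g '' V ⊆ B := by rintro _ ⟨v, hv, rfl⟩; exact (hVsub hv).2.1
    have hgVE : ⇑g '' V ⊆ E := by rintro _ ⟨v, hv, rfl⟩; exact (hVsub hv).2.2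
    have hdisj : ∀ z ∈ V, z ∉ ⇑g '' V := by
      intro z hzV hzgV
      exact Set.disjoint_left.mp hAB (hVA hzV) (hgVB hzgV)
    have hyVgV : y ∉ V ∪ ⇑g '' V := by
      rintro (h | h)
      · exact Set.disjoint_left.mp hCD (hVC h) hyD
      · exact Set.disjoint_left.mp hEFo (hgVE h) hyFo
    -- the swap homeomorphism
    obtain ⟨f, hfV, hfgV, hfout⟩ := swap_exists g V hVclopen hdisj
    have hgVclopen : IsClopen (⇑g '' V) := image_isClopen g hVclopen
    have hVgVclopen : IsClopen (V ∪ ⇑g '' V) := hVclopen.union hgVclopen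
    -- `f ∈ G` by fullness
    have hfG : f ∈ G := by
      apply hfull
      intro z
      by_cases hz : z ∈ V
      · exact ⟨V, hVclopen.isOpen, hz, g, hgG, hfV⟩
      by_cases hz2 : z ∈ ⇑g '' V
      · exact ⟨⇑g '' V, hgVclopen.isOpen, hz2, g⁻¹, inv_mem hgG, hfgV⟩
      · refine ⟨(V ∪ ⇑g '' V)ᶜ, hVgVclopen.isClosed.isOpen_compl, by simp [hz, hz2], 1,
          one_mem G, ?_⟩
        intro w hw
        simpa using hfout w hw
    -- `f` has small support
    have hfss : HasSmallSupport f :=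
      ⟨V ∪ ⇑g '' V, hVgVclopen.isClosed,
        fun h => hyVgV (h ▸ Set.mem_univ y), hfout⟩
    have hfT : f ∈ T := ⟨Subgroup.le_normalizer hfG, hfss⟩
    -- `g₂ = g * f⁻¹` has small support
    have hfinv_on_gV : ∀ z ∈ ⇑g '' V, f⁻¹ z = g.symm z := by
      intro z hz
      apply f.injective
      show f (f.symm z) = f (g.symm z)
      rw [f.apply_symm_apply]
      obtain ⟨v, hv, rfl⟩ := hz
      rw [g.symm_apply_apply, hfV hv]
    have hg2ss : HasSmallSupport (g * f⁻¹) := by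
      refine ⟨(⇑g '' V)ᶜ, hgVclopen.isOpen.isClosed_compl, ?_, ?_⟩
      · intro h
        have : g x ∈ (⇑g '' V)ᶜ := h ▸ Set.mem_univ _
        exact this ⟨x, hxV, rfl⟩
      · intro z hz
        rw [Set.notMem_compl_iff] at hz
        show g (f⁻¹ z) = z
        rw [hfinv_on_gV z hz, g.apply_symm_apply]
    have hg2T : g * f⁻¹ ∈ T :=
      ⟨Subgroup.le_normalizer (mul_mem hgG (inv_mem hfG)), hg2ss⟩
    have : g = (g * f⁻¹) * f := by group
    rw [this]
    exact mul_mem (Subgroup.subset_closure hg2T) (Subgroup.subset_closure hfT)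
  have hSeqG : S = G := le_antisymm hSleG fun g hg => hGleS g hg
  -- conjugation by anything normalizing `N` preserves `T`, hence `S = G`
  have hconjT : ∀ h : Cantor ≃ₜ Cantor, h ∈ Subgroup.normalizer ((Subgroup.normalizer (G : Set (Cantor ≃ₜ Cantor)) : Set (Cantor ≃ₜ Cantor))) →
      ∀ f ∈ T, h * f * h⁻¹ ∈ T := by
    intro h hh f hfT
    obtain ⟨hfN, U, hUc, hUne, hUfix⟩ := hfT
    refine ⟨((Subgroup.mem_normalizer_iff.mp hh) f).mp hfN, ⇑h '' U, ?_, ?_, ?_⟩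
    · exact h.isClosed_image.mpr hUc
    · exact image_ne_univ h hUne
    · intro z hz
      have hz' : h.symm z ∉ U := by
        intro hmem
        exact hz ⟨h.symm z, hmem, h.apply_symm_apply z⟩
      show h (f (h.symm z)) = z
      rw [hUfix _ hz', h.apply_symm_apply]
  -- conjugation by anything normalizing `N` preserves `S`
  have hmemS : ∀ a : Cantor ≃ₜ Cantor, a ∈ S ↔ a ∈ G := fun a => by rw [hSeqG]
  have hconjS : ∀ h' : Cantor ≃ₜ Cantor, h' ∈ Subgroup.normalizer ((Subgroup.normalizer (G : Set (Cantor ≃ₜ Cantor)) : Set (Cantor ≃ₜ Cantor))) →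
      ∀ a : Cantor ≃ₜ Cantor, a ∈ S → h' * a * h'⁻¹ ∈ S := by
    intro h' hh' a ha
    refine Subgroup.closure_induction (k := T)
      (p := fun a _ => h' * a * h'⁻¹ ∈ S) ?_ ?_ ?_ ?_ ha
    · intro x hx
      exact Subgroup.subset_closure (hconjT h' hh' x hx)
    · simpa using one_mem S
    · intro x y hx hy px py
      have heq : h' * (x * y) * h'⁻¹ = (h' * x * h'⁻¹) * (h' * y * h'⁻¹) := by group
      rw [heq]; exact mul_mem px py
    · intro x hx px
      have heq : h' * x⁻¹ * h'⁻¹ = (h' * x * h'⁻¹)⁻¹ := by group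
      rw [heq]; exact inv_mem px
  -- conclude
  apply le_antisymm _ Subgroup.le_normalizer
  intro h hh
  rw [Subgroup.mem_normalizer_iff]
  intro g
  constructor
  · intro hg
    exact (hmemS _).mp (hconjS h hh g ((hmemS g).mpr hg))
  · intro hg
    have h2 : h⁻¹ * (h * g * h⁻¹) * (h⁻¹)⁻¹ ∈ S :=
      hconjS h⁻¹ (inv_mem hh) _ ((hmemS _).mpr hg)
    have heq : h⁻¹ * (h * g * h⁻¹) * (h⁻¹)⁻¹ = g := by group
    rw [heq] at h2
    exact (hmemS g).mp h2
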